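/- Let q(θ) = exp(2Kr cos θ)/(2π I₀(2Kr)) on the circle S = ℝ/2πℤ, where r > 0 satisfies r = I₁(2Kr)/I₀(2Kr). Then q is a probability density on S (i.e. ∫_S q = 1, q > 0) and is a stationary solution of the PDE ∂_t p = (1/2)∂²_θ p − ∂_θ((J*p)·p) with J(θ) = −K sin θ, i.e. (1/2) q'' = ∂_θ((J*q)·q). -/

import Mathlib

open Real MeasureTheory

/-- Modified Bessel function of the first kind of order `j` (integral formula). -/
noncomputable def besselI (j : ℕ) (x : ℝ) : ℝ :=
  (1 / (2 * π)) * ∫ θ in (0:ℝ)..(2 * π), (Real.cos θ) ^ j * Real.exp (x * Real.cos θ)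

/-- The stationary density `q(θ) = exp(2Kr cos θ)/(2π I₀(2Kr))`. -/
noncomputable def q (K r θ : ℝ) : ℝ :=
  Real.exp (2 * K * r * Real.cos θ) / (2 * π * besselI 0 (2 * K * r))

/-- Convolution `(J * p)(θ) = ∫_S J(θ - θ') p(θ') dθ'` with `J(θ) = -K sin θ`. -/
noncomputable def Jconv (K : ℝ) (p : ℝ → ℝ) (θ : ℝ) : ℝ :=
  ∫ θ' in (0:ℝ)..(2 * π), (-K * Real.sin (θ - θ')) * p θ'

lemma besselI0_pos (x : ℝ) : 0 < besselI 0 x := by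
  unfold besselI
  have hπ : (0:ℝ) < 2 * π := by positivity
  apply mul_pos (by positivity)
  apply intervalIntegral.intervalIntegral_pos_of_pos_on
  · exact (Continuous.intervalIntegrable (by continuity) _ _)
  · intro t _; positivity
  · linarith

lemma int_exp_eq (x : ℝ) :
    (∫ θ in (0:ℝ)..(2 * π), Real.exp (x * Real.cos θ)) = 2 * π * besselI 0 x := by
  have hπ : (2 * π) ≠ 0 := by positivity
  unfold besselI
  field_simp

lemma int_cos_exp_eq (x : ℝ) :
    (∫ θ in (0:ℝ)..(2 * π), Real.cos θ * Real.exp (x * Real.cos θ)) = 2 * π * besselI 1 x := by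
  have hπ : (2 * π) ≠ 0 := by positivity
  unfold besselI
  field_simp
  simp only [mul_comm x (Real.cos _)]

lemma int_sin_exp (a : ℝ) (ha : a ≠ 0) :
    (∫ θ in (0:ℝ)..(2 * π), Real.sin θ * Real.exp (a * Real.cos θ)) = 0 := by
  have h : ∀ x ∈ Set.uIcc (0:ℝ) (2 * π),
      HasDerivAt (fun t => -(1 / a) * Real.exp (a * Real.cos t))
        (Real.sin x * Real.exp (a * Real.cos x)) x := by
    intro x _
    have h1 := (((Real.hasDerivAt_cos x).const_mul a).exp).const_mul (-(1 / a))
    refine h1.congr_deriv ?_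
    linear_combination (Real.sin x * Real.exp (a * Real.cos x)) * (inv_mul_cancel₀ ha)
  rw [intervalIntegral.integral_eq_sub_of_hasDerivAt h
    (Continuous.intervalIntegrable (by continuity) _ _)]
  simp [Real.cos_two_pi]

lemma q_hasDerivAt (K r θ : ℝ) :
    HasDerivAt (q K r) (-(2 * K * r) * Real.sin θ * q K r θ) θ := by
  have h1 : HasDerivAt (fun t => 2 * K * r * Real.cos t) (2 * K * r * (-Real.sin θ)) θ :=
    (Real.hasDerivAt_cos θ).const_mul _
  have h2 := (h1.exp).div_const (2 * π * besselI 0 (2 * K * r))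
  refine h2.congr_deriv ?_
  unfold q
  ring

lemma jconv_eq (K r : ℝ) (hK : 1 < K) (hr : 0 < r)
    (hfix : r = besselI 1 (2 * K * r) / besselI 0 (2 * K * r)) (θ : ℝ) :
    Jconv K (q K r) θ = -(K * r) * Real.sin θ := by
  have ha : (2 * K * r) ≠ 0 := by positivity
  have hI0 : besselI 0 (2 * K * r) ≠ 0 := (besselI0_pos _).ne'
  have hc : (2 * π * besselI 0 (2 * K * r)) ≠ 0 := by
    have : (0:ℝ) < π := Real.pi_pos
    positivity
  unfold Jconv
  have hint : ∀ θ', (-K * Real.sin (θ - θ')) * q K r θ' =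
      (-K * Real.sin θ / (2 * π * besselI 0 (2 * K * r))) *
        (Real.cos θ' * Real.exp (2 * K * r * Real.cos θ')) +
      (K * Real.cos θ / (2 * π * besselI 0 (2 * K * r))) *
        (Real.sin θ' * Real.exp (2 * K * r * Real.cos θ')) := by
    intro θ'
    unfold q
    rw [Real.sin_sub]
    field_simp
    ring
  simp_rw [hint]
  rw [intervalIntegral.integral_add
      ((Continuous.intervalIntegrable (by fun_prop) _ _))
      ((Continuous.intervalIntegrable (by fun_prop) _ _)),
    intervalIntegral.integral_const_mul, intervalIntegral.integral_const_mul,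
    int_cos_exp_eq, int_sin_exp _ ha]
  have h1 : besselI 1 (2 * K * r) = r * besselI 0 (2 * K * r) := by
    rw [eq_div_iff hI0] at hfix; linarith
  rw [h1]
  generalize besselI 0 (2 * K * r) = B at hI0 hc ⊢
  field_simp
  ring

/-- If `K > 1` and `r > 0` satisfies `r = I₁(2Kr)/I₀(2Kr)`, then `q` is a positive
probability density on the circle and a stationary solution of the Fokker–Planck
equation: `(1/2) q'' = ∂_θ((J*q)·q)`. -/
theorem q_is_stationary_probability_density (K r : ℝ) (hK : 1 < K) (hr : 0 < r)
    (hfix : r = besselI 1 (2 * K * r) / besselI 0 (2 * K * r)) :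
    (∀ θ, 0 < q K r θ) ∧
    (∫ θ in (0:ℝ)..(2 * π), q K r θ) = 1 ∧
    (∀ θ, (1 / 2) * deriv (deriv (q K r)) θ
        = deriv (fun θ' => Jconv K (q K r) θ' * q K r θ') θ) := by
  have hI0 : (0:ℝ) < besselI 0 (2 * K * r) := besselI0_pos _
  have hπ : (0:ℝ) < π := Real.pi_pos
  have hc : (2 * π * besselI 0 (2 * K * r)) ≠ 0 := by positivity
  refine ⟨fun θ => ?_, ?_, fun θ => ?_⟩
  · unfold q; positivity
  · unfold q
    rw [intervalIntegral.integral_div, int_exp_eq]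
    field_simp
  · -- second derivatives
    have hd1 : deriv (q K r) = fun t => -(2 * K * r) * Real.sin t * q K r t := by
      funext t; exact (q_hasDerivAt K r t).deriv
    have hsin : ∀ t, HasDerivAt (fun s => -(2 * K * r) * Real.sin s)
        (-(2 * K * r) * Real.cos t) t := fun t => (Real.hasDerivAt_sin t).const_mul _
    have hLHS : deriv (deriv (q K r)) θ =
        -(2 * K * r) * Real.cos θ * q K r θ +
        (-(2 * K * r) * Real.sin θ) * (-(2 * K * r) * Real.sin θ * q K r θ) := by
      rw [hd1]
      exact ((hsin θ).mul (q_hasDerivAt K r θ)).deriv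
    have hfun : (fun θ' => Jconv K (q K r) θ' * q K r θ') =
        fun θ' => (-(K * r) * Real.sin θ') * q K r θ' := by
      funext t; rw [jconv_eq K r hK hr hfix t]
    have hsin2 : ∀ t, HasDerivAt (fun s => -(K * r) * Real.sin s)
        (-(K * r) * Real.cos t) t := fun t => (Real.hasDerivAt_sin t).const_mul _
    have hRHS : deriv (fun θ' => Jconv K (q K r) θ' * q K r θ') θ =
        -(K * r) * Real.cos θ * q K r θ +
        (-(K * r) * Real.sin θ) * (-(2 * K * r) * Real.sin θ * q K r θ) := by
      rw [hfun]
      exact ((hsin2 θ).mul (q_hasDerivAt K r θ)).deriv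
    rw [hLHS, hRHS]
    ring
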